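/- There is an absolute constant C > 0 such that for all positive integers r and k, Σ_{a_1,…,a_r = 1}^{k} |𝓛*(a)| / (a_1 ⋯ a_r) ≤ C · (2 h_k)^r · r! · ∫_{Ω_r} min_{0 ≤ j ≤ r} 2^{-j} ( k^{ξ_1} + k^{ξ_2} + … + k^{ξ_j} + 1 ) dξ, where h_k = 1 + 1/2 + … + 1/k is the k-th harmonic number and Ω_r = { (ξ_1,…,ξ_r) ∈ ℝ^r : 0 ≤ ξ_1 ≤ ξ_2 ≤ … ≤ ξ_r ≤ 1 } (with Lebesgue measure). -/

import Mathlib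

open scoped BigOperators
open MeasureTheory

noncomputable section

/-- The set `𝓛*(a) = { Σ_{i∈I} a_i : I ⊆ {1,…,r} }` of subset sums of `a`. -/
def Lstar (r : ℕ) (a : Fin r → ℕ) : Finset ℕ :=
  (Finset.univ : Finset (Finset (Fin r))).image fun I => ∑ i ∈ I, a i

/-- The `k`-th harmonicNum number `h_k = 1 + 1/2 + ⋯ + 1/k`. -/
def harmonicNum (k : ℕ) : ℝ := ∑ i ∈ Finset.range k, (1 : ℝ) / (i + 1)

/-- The simplex `Ω_r = { ξ ∈ ℝ^r : 0 ≤ ξ₁ ≤ ξ₂ ≤ ⋯ ≤ ξ_r ≤ 1 }`. -/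
def Omega (r : ℕ) : Set (Fin r → ℝ) :=
  {ξ | (∀ i, 0 ≤ ξ i ∧ ξ i ≤ 1) ∧ Monotone ξ}

open Finset

-- harmonic facts
lemma hn_mono : Monotone harmonicNum := by
  intro m n h
  exact Finset.sum_le_sum_of_subset_of_nonneg (Finset.range_subset_range.2 h)
    (fun i _ _ => by positivity)

lemma hn_pos {k : ℕ} (hk : 1 ≤ k) : 0 < harmonicNum k := by
  have : (0:ℝ) < harmonicNum 1 := by norm_num [harmonicNum]
  exact lt_of_lt_of_le this (hn_mono hk)

lemma log_le_hn (k : ℕ) : Real.log (k+1) ≤ harmonicNum k := by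
  have h : ∀ i : ℕ, Real.log (i+1+1) - Real.log (i+1) ≤ 1/(i+1) := by
    intro i
    have h1 : (0:ℝ) < i + 1 := by positivity
    have h2 : Real.log ((i+1+1)/(i+1)) ≤ (i+1+1)/(i+1) - 1 :=
      Real.log_le_sub_one_of_pos (by positivity)
    have h3 : ((i:ℝ)+1+1)/(i+1) - 1 = 1/(i+1) := by field_simp; ring
    rw [Real.log_div (by positivity) (by positivity)] at h2
    linarith [h2, h3.symm ▸ h2]
  calc Real.log (k+1) = ∑ i ∈ range k, (Real.log (i+1+1) - Real.log (i+1)) := by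
        have := Finset.sum_range_sub (fun i => Real.log (i+1)) k
        rw [show (∑ i ∈ range k, (Real.log (↑i+1+1) - Real.log (↑i+1)))
            = ∑ i ∈ range k, ((fun n : ℕ => Real.log (n+1)) (i+1) - (fun n : ℕ => Real.log (n+1)) i) from by
          apply Finset.sum_congr rfl; intro i _; push_cast; ring_nf, this]
        norm_num
    _ ≤ ∑ i ∈ range k, (1:ℝ)/(i+1) := Finset.sum_le_sum (fun i _ => h i)
    _ = harmonicNum k := rfl

lemma hn_le_one_add_log {k : ℕ} (hk : 1 ≤ k) : harmonicNum k ≤ 1 + Real.log k := by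
  induction k with
  | zero => omega
  | succ n ih =>
    rcases Nat.eq_or_lt_of_le hk with h | h
    · simp [harmonicNum, ← h]
    · have hn1 : 1 ≤ n := by omega
      have h2 : harmonicNum (n+1) = harmonicNum n + 1/(n+1) := by
        simp [harmonicNum, Finset.sum_range_succ]
      have h3 : (1:ℝ)/(n+1) ≤ Real.log (n+1) - Real.log n := by
        have hlog : Real.log ((n:ℝ)/(n+1)) ≤ (n:ℝ)/(n+1) - 1 :=
          Real.log_le_sub_one_of_pos (by positivity)
        have hn0 : (0:ℝ) < n := by exact_mod_cast hn1
        rw [Real.log_div (by positivity) (by positivity)] at hlog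
        have : (n:ℝ)/(n+1) - 1 = -(1/(n+1)) := by field_simp; ring
        rw [this] at hlog; linarith
      have := ih hn1
      push_cast
      push_cast at h3
      linarith [h2, this]

-- key pointwise bound
lemma rpow_key {k m : ℕ} (hk : 1 ≤ k) (hm : m + 1 ≤ k) {ξ : ℝ}
    (hξ : harmonicNum m / harmonicNum k ≤ ξ) :
    ((m:ℝ)+1) ≤ 3 * (k:ℝ) ^ ξ := by
  have hk0 : (0:ℝ) < k := by exact_mod_cast hk
  have hkpos := hn_pos hk
  have hlogk : (0:ℝ) ≤ Real.log k := Real.log_nonneg (by exact_mod_cast hk)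
  have hrpow : (k:ℝ) ^ ξ = Real.exp (Real.log k * ξ) := Real.rpow_def_of_pos hk0 ξ
  have hmono : Real.log k * (harmonicNum m / harmonicNum k) ≤ Real.log k * ξ :=
    mul_le_mul_of_nonneg_left hξ hlogk
  -- key: log k * (h_m / h_k) ≥ log (m+1) - log 3
  have hu : Real.log (m+1) ≤ harmonicNum m := by
    have := log_le_hn m; push_cast at this ⊢; linarith
  have hu2 : Real.log (m+1) ≤ Real.log k := by
    apply Real.log_le_log (by positivity)
    exact_mod_cast hm
  have hu3 : Real.log k ≤ harmonicNum k := by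
    have h1 := log_le_hn k
    have h2 : Real.log k ≤ Real.log (k+1) := by
      apply Real.log_le_log hk0; linarith
    linarith
  have hu0 : (0:ℝ) ≤ Real.log (m+1) := Real.log_nonneg (by push_cast; linarith)
  have hdiff : harmonicNum k - Real.log k ≤ 1 := by
    have := hn_le_one_add_log hk; linarith
  have key : Real.log (m+1) - 1 ≤ Real.log k * (harmonicNum m / harmonicNum k) := by
    have h1 : Real.log (m+1) * (Real.log k / harmonicNum k) ≤
        Real.log k * (harmonicNum m / harmonicNum k) := by
      rw [div_eq_mul_inv, div_eq_mul_inv]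
      have : Real.log (m+1) * (Real.log k * (harmonicNum k)⁻¹)
          = Real.log k * (Real.log (m+1) * (harmonicNum k)⁻¹) := by ring
      rw [this]
      apply mul_le_mul_of_nonneg_left _ hlogk
      exact mul_le_mul_of_nonneg_right hu (by positivity)
    have h2 : Real.log (m+1) - 1 ≤ Real.log (m+1) * (Real.log k / harmonicNum k) := by
      have e : Real.log (m+1) - Real.log (m+1) * (Real.log k / harmonicNum k)
          = Real.log (m+1) * ((harmonicNum k - Real.log k) / harmonicNum k) := by
        field_simp
      have hb : Real.log (m+1) * ((harmonicNum k - Real.log k) / harmonicNum k) ≤ 1 := by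
        have hA : Real.log (m+1) / harmonicNum k ≤ 1 :=
          (div_le_one hkpos).2 (hu2.trans hu3)
        have hB : (0:ℝ) ≤ harmonicNum k - Real.log k := by linarith
        have e2 : Real.log (m+1) * ((harmonicNum k - Real.log k) / harmonicNum k)
            = (harmonicNum k - Real.log k) * (Real.log (m+1) / harmonicNum k) := by ring
        rw [e2]
        calc (harmonicNum k - Real.log k) * (Real.log (m+1) / harmonicNum k)
            ≤ (harmonicNum k - Real.log k) * 1 := by
              apply mul_le_mul_of_nonneg_left hA hB
          _ ≤ 1 := by linarith
      linarith [e ▸ hb]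
    linarith
  have h3 : Real.log 3 ≥ 1 := by
    rw [ge_iff_le, show (1:ℝ) = Real.log (Real.exp 1) by simp]
    apply Real.log_le_log (Real.exp_pos 1)
    have := Real.exp_one_lt_d9; norm_num at this ⊢; linarith
  have final : Real.log ((m+1)/3) ≤ Real.log k * ξ := by
    rw [Real.log_div (by positivity) (by norm_num)]
    calc Real.log (m+1) - Real.log 3 ≤ Real.log (m+1) - 1 := by linarith
      _ ≤ Real.log k * (harmonicNum m / harmonicNum k) := key
      _ ≤ Real.log k * ξ := hmono
  have := Real.exp_le_exp.2 final
  rw [Real.exp_log (by positivity : (0:ℝ) < ((m:ℝ)+1)/3)] at this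
  rw [hrpow]
  linarith

-- combinatorial lemma
lemma Lstar_card_le (r : ℕ) (a : Fin r → ℕ) (S : Finset (Fin r)) :
    (Lstar r a).card ≤ 2^(r - S.card) * ((∑ i ∈ S, a i) + 1) := by
  classical
  have himg : Lstar r a ⊆ (Finset.range ((∑ i ∈ S, a i)+1) ×ˢ Sᶜ.powerset).image
      (fun p => p.1 + ∑ i ∈ p.2, a i) := by
    intro x hx
    simp only [Lstar, Finset.mem_image] at hx ⊢
    obtain ⟨I, -, rfl⟩ := hx
    refine ⟨(∑ i ∈ I ∩ S, a i, I \ S), ?_, ?_⟩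
    · rw [Finset.mem_product]
      constructor
      · simp only [Finset.mem_range, Nat.lt_succ_iff]
        exact Finset.sum_le_sum_of_subset Finset.inter_subset_right
      · simp only [Finset.mem_powerset]
        intro i hi
        simp only [Finset.mem_sdiff] at hi
        simp [hi.2]
    · simp only
      rw [← Finset.sum_inter_add_sum_sdiff I S a]
  calc (Lstar r a).card ≤ _ := Finset.card_le_card himg
    _ ≤ (Finset.range ((∑ i ∈ S, a i)+1) ×ˢ Sᶜ.powerset).card := Finset.card_image_le
    _ = ((∑ i ∈ S, a i)+1) * 2^(r - S.card) := by
        rw [Finset.card_product, Finset.card_range, Finset.card_powerset, Finset.card_compl]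
        simp
    _ = 2^(r - S.card) * ((∑ i ∈ S, a i) + 1) := mul_comm _ _

-- set of subset-sum terms
def gterm (r k : ℕ) (S : Finset (Fin r)) (ξ : Fin r → ℝ) : ℝ :=
  ((2:ℝ) ^ S.card)⁻¹ * ((∑ i ∈ S, (k:ℝ) ^ (ξ i)) + 1)

def Gfun (r k : ℕ) (ξ : Fin r → ℝ) : ℝ :=
  (Finset.univ : Finset (Finset (Fin r))).inf' ⟨∅, Finset.mem_univ _⟩ fun S => gterm r k S ξ

def Ffun (r k : ℕ) (ξ : Fin r → ℝ) : ℝ :=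
  (Finset.range (r+1)).inf' ⟨0, by simp⟩ fun j => ((2:ℝ)^j)⁻¹ *
    ((∑ i ∈ Finset.univ.filter fun i : Fin r => (i:ℕ) < j, (k:ℝ) ^ (ξ i)) + 1)

lemma gterm_nonneg {r k : ℕ} (S : Finset (Fin r)) (ξ : Fin r → ℝ) : 0 ≤ gterm r k S ξ := by
  unfold gterm
  have h1 : (0:ℝ) ≤ ∑ i ∈ S, (k:ℝ) ^ (ξ i) :=
    Finset.sum_nonneg fun i _ => Real.rpow_nonneg (Nat.cast_nonneg k) _
  positivity

lemma gterm_cont {r k : ℕ} (hk : 1 ≤ k) (S : Finset (Fin r)) : Continuous (gterm r k S) := by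
  unfold gterm
  apply Continuous.mul continuous_const
  apply Continuous.add _ continuous_const
  apply continuous_finset_sum
  intro i _
  exact Continuous.rpow continuous_const (continuous_apply i)
    (fun x => Or.inl (by positivity))

lemma Gfun_cont {r k : ℕ} (hk : 1 ≤ k) : Continuous (Gfun r k) :=
  Continuous.finset_inf'_apply _ (fun S _ => gterm_cont hk S)

lemma Gfun_nonneg {r k : ℕ} (ξ : Fin r → ℝ) : 0 ≤ Gfun r k ξ :=
  Finset.le_inf' _ _ fun S _ => gterm_nonneg S ξ

lemma card_filter_lt_fin {r : ℕ} (j : ℕ) (hj : j ≤ r) :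
    (Finset.univ.filter fun i : Fin r => (i:ℕ) < j).card = j := by
  have he : (Finset.univ.filter fun i : Fin r => (i:ℕ) < j)
      = (Finset.range j).attachFin (fun m hm => lt_of_lt_of_le (Finset.mem_range.1 hm) hj) := by
    ext i
    simp [Finset.mem_attachFin]
  rw [he, Finset.card_attachFin, Finset.card_range]

lemma Gfun_le_Ffun {r k : ℕ} (ξ : Fin r → ℝ) : Gfun r k ξ ≤ Ffun r k ξ := by
  apply Finset.le_inf'
  intro j hj
  have hj' : j ≤ r := Nat.lt_succ_iff.1 (Finset.mem_range.1 hj)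
  have : ((2:ℝ)^j)⁻¹ *
      ((∑ i ∈ Finset.univ.filter fun i : Fin r => (i:ℕ) < j, (k:ℝ) ^ (ξ i)) + 1)
      = gterm r k (Finset.univ.filter fun i : Fin r => (i:ℕ) < j) ξ := by
    unfold gterm
    rw [card_filter_lt_fin j hj']
  rw [this]
  exact Finset.inf'_le _ (Finset.mem_univ _)

lemma Ffun_nonneg {r k : ℕ} (ξ : Fin r → ℝ) : 0 ≤ Ffun r k ξ := by
  apply Finset.le_inf'
  intro j _
  have h1 : (0:ℝ) ≤ ∑ i ∈ Finset.univ.filter fun i : Fin r => (i:ℕ) < j, (k:ℝ) ^ (ξ i) :=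
    Finset.sum_nonneg fun i _ => Real.rpow_nonneg (Nat.cast_nonneg k) _
  positivity

lemma Ffun_le_one {r k : ℕ} (ξ : Fin r → ℝ) : Ffun r k ξ ≤ 1 := by
  have h0 : (0:ℕ) ∈ Finset.range (r+1) := by simp
  have := Finset.inf'_le (b := (0:ℕ))
    (fun j => ((2:ℝ)^j)⁻¹ *
      ((∑ i ∈ Finset.univ.filter fun i : Fin r => (i:ℕ) < j, (k:ℝ) ^ (ξ i)) + 1)) h0
  refine le_trans this ?_
  simp

lemma Ffun_cont {r k : ℕ} (hk : 1 ≤ k) : Continuous (Ffun r k) := by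
  apply Continuous.finset_inf'_apply
  intro j _
  apply Continuous.mul continuous_const
  apply Continuous.add _ continuous_const
  apply continuous_finset_sum
  intro i _
  exact Continuous.rpow continuous_const (continuous_apply i)
    (fun x => Or.inl (by positivity))

lemma gterm_perm {r k : ℕ} (σ : Equiv.Perm (Fin r)) (S : Finset (Fin r)) (ξ : Fin r → ℝ) :
    gterm r k S (ξ ∘ σ) = gterm r k (S.image σ) ξ := by
  unfold gterm
  rw [Finset.card_image_of_injective _ σ.injective,
    Finset.sum_image (fun x _ y _ h => σ.injective h)]
  rfl

lemma Gfun_perm_le {r k : ℕ} (σ : Equiv.Perm (Fin r)) (ξ : Fin r → ℝ) :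
    Gfun r k (ξ ∘ σ) ≤ Gfun r k ξ := by
  apply Finset.le_inf'
  intro S _
  have : gterm r k S ξ = gterm r k (S.image ⇑σ⁻¹) (ξ ∘ σ) := by
    rw [gterm_perm]
    congr 1
    rw [Finset.image_image]
    have : (⇑σ ∘ ⇑σ⁻¹) = id := by
      funext x; simp
    rw [this, Finset.image_id]
  rw [this]
  exact Finset.inf'_le _ (Finset.mem_univ _)

lemma Gfun_perm {r k : ℕ} (σ : Equiv.Perm (Fin r)) (ξ : Fin r → ℝ) :
    Gfun r k (ξ ∘ σ) = Gfun r k ξ := by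
  refine le_antisymm (Gfun_perm_le σ ξ) ?_
  have := Gfun_perm_le (k := k) σ⁻¹ (ξ ∘ σ)
  have he : (ξ ∘ σ) ∘ ⇑σ⁻¹ = ξ := by
    funext x; simp
  rwa [he] at this

def ivlBox (r k : ℕ) (a : Fin r → Fin k) : Set (Fin r → ℝ) :=
  Set.univ.pi fun i => Set.Ico (harmonicNum (a i) / harmonicNum k)
    (harmonicNum ((a i : ℕ)+1) / harmonicNum k)

def lenv (k m : ℕ) : ℝ := (1/((m:ℝ)+1)) / harmonicNum k

def mval (r k : ℕ) (a : Fin r → Fin k) : ℝ :=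
  (Finset.univ : Finset (Finset (Fin r))).inf' ⟨∅, Finset.mem_univ _⟩ fun S =>
    ((2:ℝ)^S.card)⁻¹ * ((∑ i ∈ S, (((a i : ℕ):ℝ)+1)) + 1)

lemma mval_nonneg {r k : ℕ} (a : Fin r → Fin k) : 0 ≤ mval r k a := by
  apply Finset.le_inf'
  intro S _
  have : (0:ℝ) ≤ ∑ i ∈ S, (((a i : ℕ):ℝ)+1) := Finset.sum_nonneg fun i _ => by positivity
  positivity

lemma lenv_nonneg {k m : ℕ} (hk : 1 ≤ k) : 0 ≤ lenv k m := by
  unfold lenv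
  have := hn_pos hk
  positivity

lemma hn_succ (m : ℕ) : harmonicNum (m+1) = harmonicNum m + 1/((m:ℝ)+1) := by
  simp [harmonicNum, Finset.sum_range_succ]

lemma ivlBox_measurable {r k : ℕ} (a : Fin r → Fin k) : MeasurableSet (ivlBox r k a) :=
  MeasurableSet.univ_pi fun i => measurableSet_Ico

lemma ivlBox_volume {r k : ℕ} (hk : 1 ≤ k) (a : Fin r → Fin k) :
    volume (ivlBox r k a) = ENNReal.ofReal (∏ i : Fin r, lenv k (a i)) := by
  unfold ivlBox
  rw [volume_pi_pi]
  rw [ENNReal.ofReal_prod_of_nonneg (fun i _ => lenv_nonneg hk)]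
  congr 1
  funext i
  rw [Real.volume_Ico]
  congr 1
  rw [hn_succ]
  unfold lenv
  have := hn_pos hk
  field_simp
  ring

lemma ivlBox_subset {r k : ℕ} (hk : 1 ≤ k) (a : Fin r → Fin k) :
    ivlBox r k a ⊆ {ξ : Fin r → ℝ | ∀ i, 0 ≤ ξ i ∧ ξ i ≤ 1} := by
  intro ξ hξ i
  have h := hξ i (Set.mem_univ i)
  simp only [Set.mem_Ico] at h
  have hpos := hn_pos hk
  constructor
  · refine le_trans ?_ h.1
    have : 0 ≤ harmonicNum (a i) := by
      have : harmonicNum 0 ≤ harmonicNum (a i) := hn_mono (Nat.zero_le _)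
      simpa [harmonicNum] using this
    positivity
  · refine le_trans h.2.le ?_
    rw [div_le_one hpos]
    exact hn_mono (a i).2

lemma ivlBox_pairwise_disjoint {r k : ℕ} (hk : 1 ≤ k) :
    Set.PairwiseDisjoint (↑(Finset.univ : Finset (Fin r → Fin k))) (ivlBox r k) := by
  intro a _ b _ hab
  rw [Function.onFun, Set.disjoint_left]
  intro ξ hξa hξb
  have : ∃ i, a i ≠ b i := by
    by_contra h
    push_neg at h
    exact hab (funext h)
  obtain ⟨i, hi⟩ := this
  have ha := hξa i (Set.mem_univ i)
  have hb := hξb i (Set.mem_univ i)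
  simp only [Set.mem_Ico] at ha hb
  have hpos := hn_pos hk
  rcases Nat.lt_or_ge (a i : ℕ) (b i : ℕ) with h | h
  · have : harmonicNum ((a i : ℕ)+1) ≤ harmonicNum (b i) := hn_mono h
    have h2 : harmonicNum ((a i : ℕ)+1) / harmonicNum k ≤ harmonicNum (b i) / harmonicNum k :=
      (div_le_div_iff_of_pos_right hpos).2 this
    linarith [ha.2, hb.1]
  · rcases Nat.lt_or_ge (b i : ℕ) (a i : ℕ) with h' | h'
    · have : harmonicNum ((b i : ℕ)+1) ≤ harmonicNum (a i) := hn_mono h'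
      have h2 : harmonicNum ((b i : ℕ)+1) / harmonicNum k ≤ harmonicNum (a i) / harmonicNum k :=
        (div_le_div_iff_of_pos_right hpos).2 this
      linarith [hb.2, ha.1]
    · exact hi (Fin.ext (le_antisymm h' h))

lemma Gfun_ge_on_box {r k : ℕ} (hk : 1 ≤ k) (a : Fin r → Fin k) {ξ : Fin r → ℝ}
    (hξ : ξ ∈ ivlBox r k a) : mval r k a / 3 ≤ Gfun r k ξ := by
  apply Finset.le_inf'
  intro S _
  have h1 : mval r k a ≤ ((2:ℝ)^S.card)⁻¹ * ((∑ i ∈ S, (((a i : ℕ):ℝ)+1)) + 1) :=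
    Finset.inf'_le _ (Finset.mem_univ S)
  have h2 : ((2:ℝ)^S.card)⁻¹ * ((∑ i ∈ S, (((a i : ℕ):ℝ)+1)) + 1) / 3 ≤ gterm r k S ξ := by
    unfold gterm
    have hterm : ∀ i ∈ S, (((a i : ℕ):ℝ)+1)/3 ≤ (k:ℝ) ^ (ξ i) := by
      intro i _
      have hbi := hξ i (Set.mem_univ i)
      simp only [Set.mem_Ico] at hbi
      have := rpow_key (m := (a i : ℕ)) hk (a i).2 hbi.1
      linarith
    have hsum : (∑ i ∈ S, (((a i : ℕ):ℝ)+1))/3 ≤ ∑ i ∈ S, (k:ℝ) ^ (ξ i) := by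
      rw [Finset.sum_div]
      exact Finset.sum_le_sum hterm
    have hinv : (0:ℝ) ≤ ((2:ℝ)^S.card)⁻¹ := by positivity
    have : ((∑ i ∈ S, (((a i : ℕ):ℝ)+1)) + 1)/3 ≤ (∑ i ∈ S, (k:ℝ) ^ (ξ i)) + 1 := by
      have : (1:ℝ)/3 ≤ 1 := by norm_num
      rw [add_div]
      linarith
    calc ((2:ℝ)^S.card)⁻¹ * ((∑ i ∈ S, (((a i : ℕ):ℝ)+1)) + 1) / 3
        = ((2:ℝ)^S.card)⁻¹ * (((∑ i ∈ S, (((a i : ℕ):ℝ)+1)) + 1) / 3) := by ring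
      _ ≤ ((2:ℝ)^S.card)⁻¹ * ((∑ i ∈ S, (k:ℝ) ^ (ξ i)) + 1) :=
          mul_le_mul_of_nonneg_left this hinv
  refine le_trans ?_ h2
  exact (div_le_div_iff_of_pos_right (by norm_num)).2 h1

lemma card_le_mval {r k : ℕ} (a : Fin r → Fin k) :
    ((Lstar r fun i => (a i : ℕ) + 1).card : ℝ) ≤ 2^r * mval r k a := by
  obtain ⟨S, -, hS⟩ := Finset.exists_mem_eq_inf' (⟨∅, Finset.mem_univ _⟩ :
      (Finset.univ : Finset (Finset (Fin r))).Nonempty) (fun S =>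
      ((2:ℝ)^S.card)⁻¹ * ((∑ i ∈ S, (((a i : ℕ):ℝ)+1)) + 1))
  rw [show mval r k a = ((2:ℝ)^S.card)⁻¹ * ((∑ i ∈ S, (((a i : ℕ):ℝ)+1)) + 1) from hS]
  have hcard : S.card ≤ r := by
    have := Finset.card_le_univ S
    simpa using this
  have hN := Lstar_card_le r (fun i => (a i : ℕ) + 1) S
  have hcast : ((Lstar r fun i => (a i : ℕ) + 1).card : ℝ)
      ≤ (2:ℝ)^(r - S.card) * ((∑ i ∈ S, (((a i : ℕ):ℝ)+1)) + 1) := by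
    calc ((Lstar r fun i => (a i : ℕ) + 1).card : ℝ)
        ≤ ((2^(r - S.card) * ((∑ i ∈ S, ((a i : ℕ) + 1)) + 1) : ℕ) : ℝ) := by
          exact_mod_cast hN
      _ = (2:ℝ)^(r - S.card) * ((∑ i ∈ S, (((a i : ℕ):ℝ)+1)) + 1) := by
          push_cast; ring
  refine hcast.trans ?_
  have hpow : (2:ℝ)^(r - S.card) = (2:ℝ)^r * ((2:ℝ)^S.card)⁻¹ := by
    rw [← pow_sub₀ (2:ℝ) (by norm_num) hcard]
  rw [hpow, mul_assoc]

lemma Omega_measurable (r : ℕ) : MeasurableSet (Omega r) := by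
  have heq : Omega r = (⋂ i : Fin r, {ξ : Fin r → ℝ | 0 ≤ ξ i ∧ ξ i ≤ 1}) ∩
      (⋂ p : Fin r × Fin r, {ξ : Fin r → ℝ | p.1 ≤ p.2 → ξ p.1 ≤ ξ p.2}) := by
    ext ξ
    simp only [Omega, Set.mem_setOf_eq, Set.mem_inter_iff, Set.mem_iInter]
    constructor
    · rintro ⟨h1, h2⟩; exact ⟨h1, fun p hp => h2 hp⟩
    · rintro ⟨h1, h2⟩; exact ⟨h1, fun i j hij => h2 (i, j) hij⟩
  rw [heq]
  apply MeasurableSet.inter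
  · exact MeasurableSet.iInter fun i =>
      (measurableSet_le measurable_const (measurable_pi_apply i)).inter
        (measurableSet_le (measurable_pi_apply i) measurable_const)
  · apply MeasurableSet.iInter
    intro p
    by_cases hp : p.1 ≤ p.2
    · have : {ξ : Fin r → ℝ | p.1 ≤ p.2 → ξ p.1 ≤ ξ p.2} = {ξ | ξ p.1 ≤ ξ p.2} := by
        ext; simp [hp]
      rw [this]
      exact measurableSet_le (measurable_pi_apply p.1) (measurable_pi_apply p.2)
    · have : {ξ : Fin r → ℝ | p.1 ≤ p.2 → ξ p.1 ≤ ξ p.2} = Set.univ := by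
        ext; simp [hp]
      rw [this]
      exact MeasurableSet.univ

lemma Omega_subset_pi (r : ℕ) : Omega r ⊆ Set.univ.pi fun _ : Fin r => Set.Icc (0:ℝ) 1 := by
  intro ξ hξ i _
  exact ⟨(hξ.1 i).1, (hξ.1 i).2⟩

lemma cover_by_perms (r : ℕ) :
    {ξ : Fin r → ℝ | ∀ i, 0 ≤ ξ i ∧ ξ i ≤ 1} ⊆
      ⋃ σ : Equiv.Perm (Fin r), (fun ξ : Fin r → ℝ => ξ ∘ σ) ⁻¹' Omega r := by
  intro ξ hξ
  rw [Set.mem_iUnion]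
  refine ⟨Tuple.sort ξ, ?_, ?_⟩
  · intro i; exact hξ _
  · exact Tuple.monotone_sort ξ

lemma perm_coe {r : ℕ} (σ : Equiv.Perm (Fin r)) :
    ⇑(MeasurableEquiv.piCongrLeft (fun _ : Fin r => ℝ) σ).symm
      = fun ξ : Fin r → ℝ => ξ ∘ σ := by
  funext ξ
  funext i
  rfl

lemma perm_measurePreserving {r : ℕ} (σ : Equiv.Perm (Fin r)) :
    MeasurePreserving (fun ξ : Fin r → ℝ => ξ ∘ σ) volume volume := by
  have h : MeasurePreserving (MeasurableEquiv.piCongrLeft (fun _ : Fin r => ℝ) σ).symm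
      volume volume :=
    MeasurePreserving.symm _ (volume_measurePreserving_piCongrLeft (fun _ : Fin r => ℝ) σ)
  rwa [perm_coe] at h

lemma perm_measurableEmbedding {r : ℕ} (σ : Equiv.Perm (Fin r)) :
    MeasurableEmbedding (fun ξ : Fin r → ℝ => ξ ∘ σ) := by
  have := (MeasurableEquiv.piCongrLeft (fun _ : Fin r => ℝ) σ).symm.measurableEmbedding
  rwa [perm_coe] at this

lemma Ffun_integrableOn {r k : ℕ} (hk : 1 ≤ k) : IntegrableOn (Ffun r k) (Omega r) := by
  apply Measure.integrableOn_of_bounded (M := 1)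
  · refine ne_of_lt (lt_of_le_of_lt (measure_mono (Omega_subset_pi r)) ?_)
    rw [volume_pi_pi]
    simp [Real.volume_Icc]
  · exact (Ffun_cont hk).aestronglyMeasurable
  · apply ae_of_all
    intro ξ
    rw [Real.norm_eq_abs, abs_of_nonneg (Ffun_nonneg ξ)]
    exact Ffun_le_one ξ

lemma key_chain (r k : ℕ) (hk : 1 ≤ k) :
    ∑ a : Fin r → Fin k, ENNReal.ofReal (mval r k a / 3 * ∏ i : Fin r, lenv k (a i))
      ≤ (r.factorial) • ENNReal.ofReal (∫ ξ in Omega r, Ffun r k ξ) := by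
  have hGmeas : Measurable (fun ξ : Fin r → ℝ => ENNReal.ofReal (Gfun r k ξ)) :=
    (Gfun_cont hk).measurable.ennreal_ofReal
  -- step 1-2: per-box bound
  have step1 : ∀ a : Fin r → Fin k,
      ENNReal.ofReal (mval r k a / 3 * ∏ i : Fin r, lenv k (a i))
        ≤ ∫⁻ ξ in ivlBox r k a, ENNReal.ofReal (Gfun r k ξ) := by
    intro a
    have hm3 : 0 ≤ mval r k a / 3 := by
      have := mval_nonneg a; positivity
    rw [ENNReal.ofReal_mul hm3, ← ivlBox_volume hk a]
    calc ENNReal.ofReal (mval r k a / 3) * volume (ivlBox r k a)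
        = ∫⁻ _ in ivlBox r k a, ENNReal.ofReal (mval r k a / 3) := by
          rw [setLIntegral_const]
      _ ≤ ∫⁻ ξ in ivlBox r k a, ENNReal.ofReal (Gfun r k ξ) := by
          apply setLIntegral_mono hGmeas
          intro ξ hξ
          exact ENNReal.ofReal_le_ofReal (Gfun_ge_on_box hk a hξ)
  -- step 3: disjoint union
  have step3 : ∑ a : Fin r → Fin k, ∫⁻ ξ in ivlBox r k a, ENNReal.ofReal (Gfun r k ξ)
      = ∫⁻ ξ in ⋃ a ∈ (Finset.univ : Finset (Fin r → Fin k)), ivlBox r k a,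
          ENNReal.ofReal (Gfun r k ξ) := by
    rw [lintegral_biUnion_finset (ivlBox_pairwise_disjoint hk)
      (fun a _ => ivlBox_measurable a)]
  -- step 4: covering
  have hsub : (⋃ a ∈ (Finset.univ : Finset (Fin r → Fin k)), ivlBox r k a) ⊆
      ⋃ σ : Equiv.Perm (Fin r), (fun ξ : Fin r → ℝ => ξ ∘ σ) ⁻¹' Omega r := by
    intro ξ hξ
    simp only [Set.mem_iUnion] at hξ
    obtain ⟨a, -, ha⟩ := hξ
    exact cover_by_perms r (ivlBox_subset hk a ha)
  have step4 : ∫⁻ ξ in ⋃ a ∈ (Finset.univ : Finset (Fin r → Fin k)), ivlBox r k a,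
      ENNReal.ofReal (Gfun r k ξ)
      ≤ ∑ σ : Equiv.Perm (Fin r), ∫⁻ ξ in (fun ξ : Fin r → ℝ => ξ ∘ σ) ⁻¹' Omega r,
          ENNReal.ofReal (Gfun r k ξ) := by
    calc ∫⁻ ξ in ⋃ a ∈ (Finset.univ : Finset (Fin r → Fin k)), ivlBox r k a,
        ENNReal.ofReal (Gfun r k ξ)
        ≤ ∫⁻ ξ in ⋃ σ : Equiv.Perm (Fin r), (fun ξ : Fin r → ℝ => ξ ∘ σ) ⁻¹' Omega r,
            ENNReal.ofReal (Gfun r k ξ) :=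
          lintegral_mono' (Measure.restrict_mono hsub le_rfl) le_rfl
      _ ≤ ∑' σ : Equiv.Perm (Fin r), ∫⁻ ξ in (fun ξ : Fin r → ℝ => ξ ∘ σ) ⁻¹' Omega r,
            ENNReal.ofReal (Gfun r k ξ) := lintegral_iUnion_le _ _
      _ = ∑ σ : Equiv.Perm (Fin r), ∫⁻ ξ in (fun ξ : Fin r → ℝ => ξ ∘ σ) ⁻¹' Omega r,
            ENNReal.ofReal (Gfun r k ξ) := tsum_fintype _
  -- step 5: change of variables
  have step5 : ∀ σ : Equiv.Perm (Fin r),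
      ∫⁻ ξ in (fun ξ : Fin r → ℝ => ξ ∘ σ) ⁻¹' Omega r, ENNReal.ofReal (Gfun r k ξ)
        = ∫⁻ ξ in Omega r, ENNReal.ofReal (Gfun r k ξ) := by
    intro σ
    have := (perm_measurePreserving σ).setLIntegral_comp_preimage_emb
      (perm_measurableEmbedding σ) (fun ξ => ENNReal.ofReal (Gfun r k ξ)) (Omega r)
    rw [← this]
    apply lintegral_congr
    intro ξ
    rw [Gfun_perm]
  -- step 6: G ≤ F and conversion
  have step6 : ∫⁻ ξ in Omega r, ENNReal.ofReal (Gfun r k ξ)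
      ≤ ENNReal.ofReal (∫ ξ in Omega r, Ffun r k ξ) := by
    rw [ofReal_integral_eq_lintegral_ofReal (Ffun_integrableOn hk)
      (ae_of_all _ fun ξ => Ffun_nonneg ξ)]
    exact lintegral_mono fun ξ => ENNReal.ofReal_le_ofReal (Gfun_le_Ffun ξ)
  calc ∑ a : Fin r → Fin k, ENNReal.ofReal (mval r k a / 3 * ∏ i : Fin r, lenv k (a i))
      ≤ ∑ a : Fin r → Fin k, ∫⁻ ξ in ivlBox r k a, ENNReal.ofReal (Gfun r k ξ) :=
        Finset.sum_le_sum fun a _ => step1 a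
    _ = _ := step3
    _ ≤ ∑ σ : Equiv.Perm (Fin r), ∫⁻ ξ in (fun ξ : Fin r → ℝ => ξ ∘ σ) ⁻¹' Omega r,
          ENNReal.ofReal (Gfun r k ξ) := step4
    _ = ∑ _σ : Equiv.Perm (Fin r), ∫⁻ ξ in Omega r, ENNReal.ofReal (Gfun r k ξ) :=
        Finset.sum_congr rfl fun σ _ => step5 σ
    _ = (Fintype.card (Equiv.Perm (Fin r))) • ∫⁻ ξ in Omega r, ENNReal.ofReal (Gfun r k ξ) := by
        rw [Finset.sum_const, Finset.card_univ]
    _ ≤ (Fintype.card (Equiv.Perm (Fin r))) • ENNReal.ofReal (∫ ξ in Omega r, Ffun r k ξ) := by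
        exact nsmul_le_nsmul_right step6 _
    _ = (r.factorial) • ENNReal.ofReal (∫ ξ in Omega r, Ffun r k ξ) := by
        rw [Fintype.card_perm, Fintype.card_fin]

lemma real_chain (r k : ℕ) (hk : 1 ≤ k) :
    ∑ a : Fin r → Fin k, (mval r k a / 3 * ∏ i : Fin r, lenv k (a i))
      ≤ (r.factorial : ℝ) * ∫ ξ in Omega r, Ffun r k ξ := by
  have hI : 0 ≤ ∫ ξ in Omega r, Ffun r k ξ :=
    setIntegral_nonneg (Omega_measurable r) (fun ξ _ => Ffun_nonneg ξ)
  have h := key_chain r k hk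
  have hterm : ∀ a : Fin r → Fin k, 0 ≤ mval r k a / 3 * ∏ i : Fin r, lenv k (a i) := by
    intro a
    exact mul_nonneg (by have := mval_nonneg a; positivity)
      (Finset.prod_nonneg fun i _ => lenv_nonneg hk)
  rw [← ENNReal.ofReal_sum_of_nonneg (fun a _ => hterm a), nsmul_eq_mul,
    ← ENNReal.ofReal_natCast r.factorial, ← ENNReal.ofReal_mul (Nat.cast_nonneg _)] at h
  exact (ENNReal.ofReal_le_ofReal_iff (mul_nonneg (Nat.cast_nonneg _) hI)).1 h

theorem sum_Lstar_le_integral' : ∀ (r k : ℕ), 1 ≤ r → 1 ≤ k →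
    (∑ a : Fin r → Fin k,
        ((Lstar r fun i => (a i : ℕ) + 1).card : ℝ) / ∏ i : Fin r, ((a i : ℕ) + 1 : ℝ)) ≤
      3 * (2 * harmonicNum k) ^ r * (Nat.factorial r : ℝ) *
        ∫ ξ in Omega r, Ffun r k ξ := by
  intro r k hr hk
  have Hpos := hn_pos hk
  have hchain := real_chain r k hk
  have key : ∀ a : Fin r → Fin k,
      ((Lstar r fun i => (a i : ℕ) + 1).card : ℝ) / ∏ i : Fin r, ((a i : ℕ) + 1 : ℝ)
        ≤ 3 * (2 * harmonicNum k)^r * (mval r k a / 3 * ∏ i : Fin r, lenv k (a i)) := by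
    intro a
    have hinv : (∏ i : Fin r, ((a i : ℕ) + 1 : ℝ))⁻¹
        = harmonicNum k ^ r * ∏ i : Fin r, lenv k (a i) := by
      rw [← Finset.prod_inv_distrib]
      have : ∀ i : Fin r, (((a i : ℕ) : ℝ) + 1)⁻¹ = harmonicNum k * lenv k (a i) := by
        intro i
        unfold lenv
        field_simp
      calc ∏ i : Fin r, (((a i : ℕ) : ℝ) + 1)⁻¹
          = ∏ i : Fin r, (harmonicNum k * lenv k (a i)) := by
            exact Finset.prod_congr rfl fun i _ => this i
        _ = harmonicNum k ^ r * ∏ i : Fin r, lenv k (a i) := by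
            rw [Finset.prod_mul_distrib, Finset.prod_const, Finset.card_univ, Fintype.card_fin]
    have hlenn : 0 ≤ ∏ i : Fin r, lenv k (a i) :=
      Finset.prod_nonneg fun i _ => lenv_nonneg hk
    calc ((Lstar r fun i => (a i : ℕ) + 1).card : ℝ) / ∏ i : Fin r, ((a i : ℕ) + 1 : ℝ)
        = ((Lstar r fun i => (a i : ℕ) + 1).card : ℝ) * (∏ i : Fin r, ((a i : ℕ) + 1 : ℝ))⁻¹ := by
          rw [div_eq_mul_inv]
      _ ≤ (2^r * mval r k a) * (∏ i : Fin r, ((a i : ℕ) + 1 : ℝ))⁻¹ := by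
          apply mul_le_mul_of_nonneg_right (card_le_mval a)
          have : (0:ℝ) < ∏ i : Fin r, ((a i : ℕ) + 1 : ℝ) :=
            Finset.prod_pos fun i _ => by positivity
          positivity
      _ = (2^r * mval r k a) * (harmonicNum k ^ r * ∏ i : Fin r, lenv k (a i)) := by rw [hinv]
      _ = 3 * (2 * harmonicNum k)^r * (mval r k a / 3 * ∏ i : Fin r, lenv k (a i)) := by
          rw [mul_pow]
          ring
  calc (∑ a : Fin r → Fin k,
      ((Lstar r fun i => (a i : ℕ) + 1).card : ℝ) / ∏ i : Fin r, ((a i : ℕ) + 1 : ℝ))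
      ≤ ∑ a : Fin r → Fin k,
          3 * (2 * harmonicNum k)^r * (mval r k a / 3 * ∏ i : Fin r, lenv k (a i)) :=
        Finset.sum_le_sum fun a _ => key a
    _ = 3 * (2 * harmonicNum k)^r *
          ∑ a : Fin r → Fin k, (mval r k a / 3 * ∏ i : Fin r, lenv k (a i)) := by
        rw [Finset.mul_sum]
    _ ≤ 3 * (2 * harmonicNum k)^r * ((r.factorial : ℝ) * ∫ ξ in Omega r, Ffun r k ξ) := by
        apply mul_le_mul_of_nonneg_left hchain
        have h2 : (0:ℝ) ≤ 2 * harmonicNum k := by positivity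
        positivity
    _ = 3 * (2 * harmonicNum k) ^ r * (Nat.factorial r : ℝ) *
          ∫ ξ in Omega r, Ffun r k ξ := by ring


theorem sum_Lstar_le_integral :
    ∃ C : ℝ, 0 < C ∧ ∀ (r k : ℕ), 1 ≤ r → 1 ≤ k →
      (∑ a : Fin r → Fin k,
          ((Lstar r fun i => (a i : ℕ) + 1).card : ℝ) / ∏ i : Fin r, ((a i : ℕ) + 1 : ℝ)) ≤
        C * (2 * harmonicNum k) ^ r * (Nat.factorial r : ℝ) *
          ∫ ξ in Omega r,
            (Finset.range (r + 1)).inf' ⟨0, by simp⟩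
              (fun j => ((2 : ℝ) ^ j)⁻¹ *
                ((∑ i ∈ Finset.univ.filter fun i : Fin r => (i : ℕ) < j,
                    (k : ℝ) ^ (ξ i)) + 1)) := by
  exact ⟨3, by norm_num, fun r k hr hk => sum_Lstar_le_integral' r k hr hk⟩
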